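/- Let H ≥ 2 and let w₁ ∈ ℝ^{k₁}, ..., w_H ∈ ℝ^{k_H} be nonzero vectors, and δ₁, ..., δ_{H-1} ∈ ℝ. Then there are exactly 2^{H-1} tuples (λ₁,...,λ_H) ∈ ℝ^H with λ₁⋯λ_H = 1 and δ_i = ‖λ_{i+1} w_{i+1}‖² − ‖λ_i w_i‖² for all i = 1,...,H−1, and all such tuples agree up to sign changes of the components. -/
import Mathlib


lemma stmt2_mono (n : ℕ) (hn : 0 < n) (σ : Fin n → ℝ) (t t' : ℝ)
    (ht : ∀ i, 0 < t + σ i) (ht' : ∀ i, 0 < t' + σ i)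
    (h : ∏ i, (t + σ i) = ∏ i, (t' + σ i)) : t = t' := by
  have key : ∀ a b : ℝ, (∀ i, 0 < a + σ i) → a < b →
      ∏ i, (a + σ i) < ∏ i, (b + σ i) := by
    intro a b ha hab
    apply Finset.prod_lt_prod_of_nonempty
    · intro i _; exact ha i
    · intro i _; linarith
    · exact Finset.univ_nonempty_iff.mpr ⟨⟨0, hn⟩⟩
  rcases lt_trichotomy t t' with hlt | heq | hgt
  · exact absurd h (ne_of_lt (key t t' ht hlt))
  · exact heq
  · exact absurd h.symm (ne_of_lt (key t' t ht' hgt))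

lemma stmt2_exists (n : ℕ) (hn : 0 < n) (σ : Fin n → ℝ) (C : ℝ) (hC : 0 < C) :
    ∃ t, (∀ i, 0 < t + σ i) ∧ ∏ i, (t + σ i) = C := by
  have hne : (Finset.univ : Finset (Fin n)).Nonempty := Finset.univ_nonempty_iff.mpr ⟨⟨0, hn⟩⟩
  obtain ⟨j, _, hj⟩ := Finset.exists_max_image Finset.univ (fun i => -σ i) hne
  set m := -σ j with hm
  have hcont : Continuous fun t : ℝ => ∏ i, (t + σ i) := by
    apply continuous_finset_prod
    intro i _
    exact continuous_id.add continuous_const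
  have hfm : (∏ i, (m + σ i)) = 0 := by
    apply Finset.prod_eq_zero (Finset.mem_univ j)
    simp [hm]
  have hle : m ≤ m + C + 1 := by linarith
  have hbig : C ≤ ∏ i, ((m + C + 1) + σ i) := by
    have h1 : (C + 1) ^ n ≤ ∏ i, ((m + C + 1) + σ i) := by
      calc (C+1)^n = ∏ _i : Fin n, (C+1) := by
            rw [Finset.prod_const, Finset.card_univ, Fintype.card_fin]
        _ ≤ _ := Finset.prod_le_prod (fun i _ => by positivity) ?_
      intro i _
      have := hj i (Finset.mem_univ i)
      linarith
    have h2 : C + 1 ≤ (C + 1) ^ n := by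
      have := le_self_pow₀ (by linarith : (1:ℝ) ≤ C + 1) hn.ne'
      linarith [this]
    linarith
  have := intermediate_value_Icc hle hcont.continuousOn
  have hmem : C ∈ Set.Icc ((∏ i, (m + σ i))) (∏ i, ((m + C + 1) + σ i)) := by
    constructor
    · rw [hfm]; exact hC.le
    · exact hbig
  obtain ⟨t, htI, htv⟩ := this hmem
  refine ⟨t, ?_, by simpa using htv⟩
  have hpos : ∀ i, 0 ≤ t + σ i := by
    intro i
    have := hj i (Finset.mem_univ i)
    have := htI.1
    linarith
  intro i
  rcases lt_or_eq_of_le (hpos i) with h | h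
  · exact h
  · exfalso
    have : (∏ i, (t + σ i)) = 0 := Finset.prod_eq_zero (Finset.mem_univ i) h.symm
    simp only at htv
    rw [htv] at this; linarith

/-- For H ≥ 2 nonzero vectors w₁,...,w_H and δ₁,...,δ_{H-1} ∈ ℝ,
there are exactly 2^{H-1} tuples (λ₁,...,λ_H) with λ₁⋯λ_H = 1 and
δ_i = ‖λ_{i+1} w_{i+1}‖² − ‖λ_i w_i‖², and all such tuples agree up to signs. -/
theorem stmt_2 (H : ℕ) (hH : 2 ≤ H) (k : Fin H → ℕ)
    (w : ∀ i, EuclideanSpace ℝ (Fin (k i))) (hw : ∀ i, w i ≠ 0)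
    (δ : ℕ → ℝ) (S : Set (Fin H → ℝ))
    (hS : S = {lam | (∏ i, lam i) = 1 ∧
      ∀ i : ℕ, ∀ h : i + 1 < H,
        δ i = ‖lam ⟨i + 1, h⟩ • w ⟨i + 1, h⟩‖ ^ 2
            - ‖lam ⟨i, by omega⟩ • w ⟨i, by omega⟩‖ ^ 2}) :
    S.ncard = 2 ^ (H - 1) ∧
    ∀ lam ∈ S, ∀ lam' ∈ S, ∀ i, lam' i = lam i ∨ lam' i = -lam i := by
  classical
  obtain ⟨m, rfl⟩ : ∃ m, H = m + 2 := ⟨H - 2, by omega⟩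
  subst hS
  set N : Fin (m + 2) → ℝ := fun i => ‖w i‖ ^ 2 with hNdef
  have hNpos : ∀ i, 0 < N i := fun i => pow_pos (norm_pos_iff.mpr (hw i)) 2
  set σ : Fin (m + 2) → ℝ := fun i => ∑ j ∈ Finset.range i.val, δ j with hσdef
  have hns : ∀ (c : ℝ) (i : Fin (m + 2)), ‖c • w i‖ ^ 2 = c ^ 2 * N i := by
    intro c i
    rw [norm_smul, mul_pow, Real.norm_eq_abs, sq_abs]
  -- membership unfolding
  have hmem : ∀ lam : Fin (m+2) → ℝ,
      lam ∈ {lam : Fin (m+2) → ℝ | (∏ i, lam i) = 1 ∧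
        ∀ i : ℕ, ∀ h : i + 1 < m + 2,
          δ i = ‖lam ⟨i + 1, h⟩ • w ⟨i + 1, h⟩‖ ^ 2
              - ‖lam ⟨i, by omega⟩ • w ⟨i, by omega⟩‖ ^ 2} ↔
      ((∏ i, lam i) = 1 ∧
        ∀ i : ℕ, ∀ h : i + 1 < m + 2,
          δ i = (lam ⟨i + 1, h⟩)^2 * N ⟨i + 1, h⟩ - (lam ⟨i, by omega⟩)^2 * N ⟨i, by omega⟩) := by
    intro lam
    simp only [Set.mem_setOf_eq, hns]
  set S : Set (Fin (m+2) → ℝ) := {lam : Fin (m+2) → ℝ | (∏ i, lam i) = 1 ∧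
        ∀ i : ℕ, ∀ h : i + 1 < m + 2,
          δ i = ‖lam ⟨i + 1, h⟩ • w ⟨i + 1, h⟩‖ ^ 2
              - ‖lam ⟨i, by omega⟩ • w ⟨i, by omega⟩‖ ^ 2} with hSdef
  -- recurrence
  have hrec : ∀ lam ∈ S, ∀ i : Fin (m+2),
      (lam i)^2 * N i = (lam 0)^2 * N 0 + σ i := by
    intro lam hlam i
    obtain ⟨v, hv⟩ := i
    induction v with
    | zero =>
      have : (⟨0, hv⟩ : Fin (m+2)) = 0 := rfl
      rw [this]
      simp [hσdef]
    | succ v ih =>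
      have hv' : v < m + 2 := by omega
      have hc := ((hmem lam).mp hlam).2 v hv
      have hprev := ih hv'
      have hσs : σ ⟨v+1, hv⟩ = σ ⟨v, hv'⟩ + δ v := by
        simp [hσdef, Finset.sum_range_succ]
      rw [hσs]
      have : (lam ⟨v, hv'⟩)^2 * N ⟨v, hv'⟩ = (lam ⟨v, by omega⟩)^2 * N ⟨v, by omega⟩ := rfl
      linarith [hc, hprev, this]
  have hlamne : ∀ lam ∈ S, ∀ i, lam i ≠ 0 := by
    intro lam hlam i h
    have h0 : (∏ i, lam i) = 0 := Finset.prod_eq_zero (Finset.mem_univ i) h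
    rw [((hmem lam).mp hlam).1] at h0
    norm_num at h0
  have hCpos : 0 < ∏ i, N i := Finset.prod_pos (fun i _ => hNpos i)
  -- the product identity
  have hprodC : ∀ lam ∈ S, ∏ i, ((lam 0)^2 * N 0 + σ i) = ∏ i, N i := by
    intro lam hlam
    have : ∀ i, (lam 0)^2 * N 0 + σ i = (lam i)^2 * N i :=
      fun i => (hrec lam hlam i).symm
    rw [Finset.prod_congr rfl (fun i _ => this i)]
    have : (∏ i, (lam i)^2 * N i) = (∏ i, lam i)^2 * ∏ i, N i := by
      rw [Finset.prod_mul_distrib, Finset.prod_pow]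
    rw [this, ((hmem lam).mp hlam).1, one_pow, one_mul]
  have hpos : ∀ lam ∈ S, ∀ i, 0 < (lam 0)^2 * N 0 + σ i := by
    intro lam hlam i
    rw [← hrec lam hlam i]
    exact mul_pos (pow_two_pos_of_ne_zero (hlamne lam hlam i)) (hNpos i)
  -- sign lemma
  have hsign : ∀ lam ∈ S, ∀ lam' ∈ S, ∀ i, (lam' i)^2 = (lam i)^2 := by
    intro lam hlam lam' hlam' i
    have ht := stmt2_mono (m+2) (by omega) σ ((lam 0)^2 * N 0) ((lam' 0)^2 * N 0)
      (hpos lam hlam) (hpos lam' hlam')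
      (by rw [hprodC lam hlam, hprodC lam' hlam'])
    have h1 := hrec lam hlam i
    have h2 := hrec lam' hlam' i
    have : (lam' i)^2 * N i = (lam i)^2 * N i := by rw [h1, h2, ht]
    exact mul_right_cancel₀ (hNpos i).ne' this
  have hpm : ∀ lam ∈ S, ∀ lam' ∈ S, ∀ i, lam' i = lam i ∨ lam' i = -lam i := by
    intro lam hlam lam' hlam' i
    exact sq_eq_sq_iff_eq_or_eq_neg.mp (hsign lam hlam lam' hlam' i)
  refine ⟨?_, fun lam hlam lam' hlam' => hpm lam hlam lam' hlam'⟩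
  -- existence of a positive solution μ
  obtain ⟨t0, ht0pos, ht0⟩ := stmt2_exists (m+2) (by omega) σ (∏ i, N i) hCpos
  set μ : Fin (m+2) → ℝ := fun i => Real.sqrt (t0 + σ i) / ‖w i‖ with hμdef
  have hμpos : ∀ i, 0 < μ i := fun i =>
    div_pos (Real.sqrt_pos.mpr (ht0pos i)) (norm_pos_iff.mpr (hw i))
  have hμsq : ∀ i, (μ i)^2 * N i = t0 + σ i := by
    intro i
    have hn0 : ‖w i‖ ≠ 0 := norm_ne_zero_iff.mpr (hw i)
    rw [hμdef]
    simp only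
    rw [div_pow, Real.sq_sqrt (ht0pos i).le, hNdef]
    field_simp
  have hμprod : ∏ i, μ i = 1 := by
    have h1 : (∏ i, μ i)^2 = 1 := by
      rw [← Finset.prod_pow]
      have : ∀ i, (μ i)^2 = (t0 + σ i) / N i := by
        intro i
        rw [← hμsq i]
        field_simp [(hNpos i).ne']
      rw [Finset.prod_congr rfl (fun i _ => this i), Finset.prod_div_distrib, ht0,
        div_self hCpos.ne']
    have h2 : (∏ i, μ i) = 1 ∨ (∏ i, μ i) = -1 :=
      sq_eq_sq_iff_eq_or_eq_neg.mp (by rw [h1, one_pow])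
    rcases h2 with h | h
    · exact h
    · exfalso
      have := Finset.prod_pos (fun i (_ : i ∈ Finset.univ) => hμpos i)
      rw [h] at this; linarith
  have hμS : μ ∈ S := by
    rw [hmem]
    refine ⟨hμprod, ?_⟩
    intro v hv
    have hv' : v < m + 2 := by omega
    have e1 : (μ ⟨v+1, hv⟩)^2 * N ⟨v+1, hv⟩ = t0 + σ ⟨v+1, hv⟩ := hμsq _
    have e2 : (μ ⟨v, by omega⟩)^2 * N ⟨v, by omega⟩ = t0 + σ ⟨v, hv'⟩ := hμsq _
    have hσs : σ ⟨v+1, hv⟩ = σ ⟨v, hv'⟩ + δ v := by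
      simp [hσdef, Finset.sum_range_succ]
    rw [e1, e2, hσs]
    ring
  -- sign-flip closure
  have hflip : ∀ lam', (∏ i, lam' i) = 1 → (∀ i, lam' i = μ i ∨ lam' i = -μ i) → lam' ∈ S := by
    intro lam' h1 h2
    rw [hmem]
    refine ⟨h1, ?_⟩
    intro v hv
    have e : ∀ i : Fin (m+2), (lam' i)^2 = (μ i)^2 := by
      intro i
      rcases h2 i with h | h <;> rw [h] <;> ring
    have := ((hmem μ).mp hμS).2 v hv
    rw [this, e, e]
  -- the counting bijection
  set e : Bool → ℝ := fun x => cond x 1 (-1) with hedef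
  have he_pm : ∀ x, e x = 1 ∨ e x = -1 := by intro x; cases x <;> simp [hedef]
  have he_sq : ∀ x, (e x)^2 = 1 := by intro x; rcases he_pm x with h | h <;> rw [h] <;> ring
  have he_inj : Function.Injective e := by
    intro x y h
    cases x <;> cases y <;> simp [hedef] at h ⊢ <;> linarith
  set g : (Fin (m+1) → Bool) → (Fin (m+2) → ℝ) :=
    fun b => Fin.cons ((∏ j, e (b j)) * μ 0) (fun j => e (b j) * μ j.succ) with hgdef
  have hgprod : ∀ b, (∏ i, g b i) = 1 := by
    intro b
    rw [Fin.prod_univ_succ]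
    simp only [hgdef, Fin.cons_zero, Fin.cons_succ]
    rw [Finset.prod_mul_distrib]
    have hc2 : (∏ j, e (b j)) * (∏ j, e (b j)) = 1 := by
      rw [← Finset.prod_mul_distrib]
      have : ∀ j : Fin (m+1), e (b j) * e (b j) = 1 := by
        intro j; have := he_sq (b j); nlinarith
      rw [Finset.prod_congr rfl (fun j _ => this j), Finset.prod_const_one]
    calc (∏ j, e (b j)) * μ 0 * ((∏ j, e (b j)) * ∏ j : Fin (m+1), μ j.succ)
        = ((∏ j, e (b j)) * (∏ j, e (b j))) * (μ 0 * ∏ j : Fin (m+1), μ j.succ) := by ring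
      _ = μ 0 * ∏ j : Fin (m+1), μ j.succ := by rw [hc2, one_mul]
      _ = ∏ i, μ i := (Fin.prod_univ_succ μ).symm
      _ = 1 := hμprod
  have hcpm : ∀ b : Fin (m+1) → Bool, (∏ j, e (b j)) = 1 ∨ (∏ j, e (b j)) = -1 := by
    intro b
    apply sq_eq_sq_iff_eq_or_eq_neg.mp
    rw [one_pow, sq, ← Finset.prod_mul_distrib]
    have : ∀ j : Fin (m+1), e (b j) * e (b j) = 1 := by
      intro j; have := he_sq (b j); nlinarith
    rw [Finset.prod_congr rfl (fun j _ => this j), Finset.prod_const_one]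
  have hgpm : ∀ b, ∀ i, g b i = μ i ∨ g b i = -μ i := by
    intro b i
    refine Fin.cases ?_ ?_ i
    · simp only [hgdef, Fin.cons_zero]
      rcases hcpm b with h | h <;> rw [h] <;> [left; right] <;> ring
    · intro j
      simp only [hgdef, Fin.cons_succ]
      rcases he_pm (b j) with h | h <;> rw [h] <;> [left; right] <;> ring
  have hgS : ∀ b, g b ∈ S := fun b => hflip (g b) (hgprod b) (hgpm b)
  have hginj : Function.Injective g := by
    intro b b' h
    funext j
    have := congrFun h j.succ
    simp only [hgdef, Fin.cons_succ] at this
    have := mul_right_cancel₀ (hμpos j.succ).ne' this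
    exact he_inj this
  have hgsurj : ∀ lam ∈ S, ∃ b, g b = lam := by
    intro lam hlam
    set b : Fin (m+1) → Bool := fun j => decide (lam j.succ = μ j.succ) with hbdef
    have hsucc : ∀ j : Fin (m+1), g b j.succ = lam j.succ := by
      intro j
      simp only [hgdef, Fin.cons_succ, hbdef]
      rcases hpm μ hμS lam hlam j.succ with h | h
      · rw [h]; simp [hedef]
      · have hne : lam j.succ ≠ μ j.succ := by
          rw [h]; intro hc
          have := hμpos j.succ; linarith
        rw [decide_eq_false hne, h]; simp [hedef]
    have hz : g b 0 = lam 0 := by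
      have h1 : g b 0 * ∏ j : Fin (m+1), g b j.succ = 1 := by
        rw [← Fin.prod_univ_succ]; exact hgprod b
      have h2 : lam 0 * ∏ j : Fin (m+1), lam j.succ = 1 := by
        rw [← Fin.prod_univ_succ]; exact ((hmem lam).mp hlam).1
      have h3 : (∏ j : Fin (m+1), g b j.succ) = ∏ j : Fin (m+1), lam j.succ :=
        Finset.prod_congr rfl (fun j _ => hsucc j)
      have hPne : (∏ j : Fin (m+1), lam j.succ) ≠ 0 :=
        Finset.prod_ne_zero_iff.mpr (fun j _ => hlamne lam hlam j.succ)
      rw [h3] at h1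
      have := h1.trans h2.symm
      exact mul_right_cancel₀ hPne this
    exact ⟨b, funext fun i => Fin.cases hz hsucc i⟩
  -- conclude the cardinality
  have hbij : Function.Bijective (fun b => (⟨g b, hgS b⟩ : S)) := by
    constructor
    · intro b b' h
      exact hginj (congrArg Subtype.val h)
    · rintro ⟨lam, hlam⟩
      obtain ⟨b, hb⟩ := hgsurj lam hlam
      exact ⟨b, Subtype.ext hb⟩
  have : Nat.card S = 2 ^ (m + 1) := by
    rw [← Nat.card_congr (Equiv.ofBijective _ hbij)]
    simp [Nat.card_eq_fintype_card]
  rw [← Nat.card_coe_set_eq, this]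
  rfl
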